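/- Let a > b > 0, c² = a² − b², δ = √(a⁴ − a²b² + b⁴). If a/b > √(2√2 − 1), then x⊥ = a²√(a⁴ + 3b⁴ − 4b²δ)/c³ is the unique positive root in the interval (0, a) of the quartic c⁸x⁴ − 2a⁴c²(a⁴ + 3b⁴)x² + a⁸(a⁴ + 2a²b² − 7b⁴) = 0. -/

import Mathlib

set_option maxHeartbeats 2000000 in
theorem stmt_1 (a b c δ : ℝ) (hab : a > b) (hb : b > 0)
    (hc : c > 0) (hc2 : c^2 = a^2 - b^2)
    (hδ : δ = Real.sqrt (a^4 - a^2*b^2 + b^4))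
    (hratio : a / b > Real.sqrt (2 * Real.sqrt 2 - 1))
    (xperp : ℝ) (hx : xperp = a^2 * Real.sqrt (a^4 + 3*b^4 - 4*b^2*δ) / c^3) :
    (0 < xperp ∧ xperp < a ∧
      c^8 * xperp^4 - 2*a^4*c^2*(a^4 + 3*b^4) * xperp^2
        + a^8*(a^4 + 2*a^2*b^2 - 7*b^4) = 0) ∧
    ∀ x : ℝ, 0 < x → x < a →
      c^8 * x^4 - 2*a^4*c^2*(a^4 + 3*b^4) * x^2
        + a^8*(a^4 + 2*a^2*b^2 - 7*b^4) = 0 → x = xperp := by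
  have ha : (0:ℝ) < a := lt_trans hb hab
  have hb2 : (0:ℝ) < b^2 := by positivity
  have hDpos : (0:ℝ) < a^4 - a^2*b^2 + b^4 := by nlinarith [sq_nonneg (a^2 - b^2)]
  have hδ2 : δ^2 = a^4 - a^2*b^2 + b^4 := by
    rw [hδ, Real.sq_sqrt hDpos.le]
  have hδpos : 0 < δ := by rw [hδ]; exact Real.sqrt_pos.mpr hDpos
  -- a^2 > (2√2 - 1) b^2
  have hs2 : Real.sqrt 2 ^ 2 = 2 := Real.sq_sqrt (by norm_num)
  have hs2pos : (0:ℝ) < Real.sqrt 2 := Real.sqrt_pos.mpr (by norm_num)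
  have harg : (0:ℝ) < 2 * Real.sqrt 2 - 1 := by nlinarith
  have hsr2 : Real.sqrt (2 * Real.sqrt 2 - 1) ^ 2 = 2 * Real.sqrt 2 - 1 :=
    Real.sq_sqrt harg.le
  have hsrpos : (0:ℝ) < Real.sqrt (2 * Real.sqrt 2 - 1) := Real.sqrt_pos.mpr harg
  have hab2 : Real.sqrt (2 * Real.sqrt 2 - 1) * b < a := (lt_div_iff₀ hb).mp hratio
  have ha2 : a^2 > (2 * Real.sqrt 2 - 1) * b^2 := by
    nlinarith [hsr2, mul_pos hsrpos hb, mul_pos ha hb]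
  -- P > 0
  have hP : (0:ℝ) < a^4 + 2*a^2*b^2 - 7*b^4 := by
    have h1 : (0:ℝ) < a^2 + b^2 - 2*Real.sqrt 2 * b^2 := by nlinarith
    have h2 : (0:ℝ) < a^2 + b^2 + 2*Real.sqrt 2 * b^2 := by nlinarith
    have h8 : Real.sqrt 2 ^ 2 * b^4 = 2 * b^4 := by rw [hs2]
    nlinarith [mul_pos h1 h2, h8]
  have hcp : (0:ℝ) < a^2 - b^2 := by nlinarith
  -- E > 0
  have hE : (0:ℝ) < a^4 + 3*b^4 - 4*b^2*δ := by
    nlinarith [hδ2, mul_pos (mul_pos hb2 hb2) hP, sq_nonneg (a^2-b^2),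
      mul_pos (mul_pos hcp hcp) hP, mul_pos hb2 hδpos]
  have hsE : Real.sqrt (a^4 + 3*b^4 - 4*b^2*δ) ^ 2 = a^4 + 3*b^4 - 4*b^2*δ :=
    Real.sq_sqrt hE.le
  have hsEpos : (0:ℝ) < Real.sqrt (a^4 + 3*b^4 - 4*b^2*δ) := Real.sqrt_pos.mpr hE
  have hxpos : 0 < xperp := by rw [hx]; positivity
  have hxp2 : c^6 * xperp^2 = a^4 * (a^4 + 3*b^4 - 4*b^2*δ) := by
    rw [hx, div_pow, mul_pow, hsE]
    have hc3 : (c^3)^2 ≠ 0 := by positivity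
    rw [mul_div_assoc', div_eq_iff hc3]
    ring
  -- δ > b^2 etc for bound; key: 4a²δ > 3a⁴ + b⁴
  have haδ : 4*a^2*δ > 3*a^4 + b^4 := by
    nlinarith [hδ2, mul_pos (mul_pos hcp hcp) (show (0:ℝ) < 7*a^4 - 2*a^2*b^2 - b^4 by nlinarith),
      mul_pos (mul_pos ha ha) hδpos]
  have hc6 : c^6 = (a^2-b^2)^3 := by
    have h : c^6 = (c^2)^3 := by ring
    rw [h, hc2]
  have hc6a : c^6 * a^2 = (a^2-b^2)^3 * a^2 := by rw [hc6]
  have hxa : xperp < a := by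
    have hmm := mul_lt_mul_of_pos_left haδ (show (0:ℝ) < a^2*b^2 by positivity)
    have h1 : c^6 * xperp^2 < c^6 * a^2 := by
      rw [hxp2]
      nlinarith [hc6a, hmm]
    have h2 : xperp^2 < a^2 := lt_of_mul_lt_mul_left h1 (by positivity)
    nlinarith
  have hmain : c^8 * xperp^4 - 2*a^4*c^2*(a^4 + 3*b^4) * xperp^2
      + a^8*(a^4 + 2*a^2*b^2 - 7*b^4) = 0 := by
    have hc4 : (c:ℝ)^4 ≠ 0 := by positivity
    have key : c^4 * (c^8 * xperp^4 - 2*a^4*c^2*(a^4 + 3*b^4) * xperp^2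
        + a^8*(a^4 + 2*a^2*b^2 - 7*b^4)) = 0 := by
      linear_combination (c^6*xperp^2 + a^4*(a^4+3*b^4-4*b^2*δ) - 2*a^4*(a^4+3*b^4)) * hxp2
        + 16*a^8*b^4 * hδ2
        + a^8*(a^4 + 2*a^2*b^2 - 7*b^4)*(c^2 + a^2 - b^2) * hc2
    exact (mul_eq_zero.mp key).resolve_left hc4
  refine ⟨⟨hxpos, hxa, hmain⟩, ?_⟩
  intro x hx0 hxa' heq
  have hsub : (x^2 - xperp^2) * (c^8*(x^2 + xperp^2) - 2*a^4*c^2*(a^4+3*b^4)) = 0 := by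
    linear_combination heq - hmain
  have hfac : c^8*(x^2 + xperp^2) - 2*a^4*c^2*(a^4+3*b^4) < 0 := by
    have hx2 : x^2 < a^2 := by nlinarith
    have h3 : c^6 * (x^2 + xperp^2) < 2*a^4*(a^4+3*b^4) := by
      nlinarith [hxp2, mul_lt_mul_of_pos_left hx2 (pow_pos hc 6), hc6a,
        (show (0:ℝ) < a^4*(b^2*δ) by positivity),
        (show (0:ℝ) < a^6*b^2 by positivity), (show (0:ℝ) < a^2*b^6 by positivity)]
    have h4 := mul_neg_of_pos_of_neg (show (0:ℝ) < c^2 by positivity)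
      (show c^6*(x^2+xperp^2) - 2*a^4*(a^4+3*b^4) < 0 by linarith)
    nlinarith [h4]
  have hx2eq : x^2 = xperp^2 := by
    rcases mul_eq_zero.mp hsub with h | h
    · linarith [sub_eq_zero.mp h]
    · exact absurd h (ne_of_lt hfac)
  nlinarith [hx2eq, hxpos, hx0]
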